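/- Let s ∈ ℂ ∖ (−∞,0] and set ω := Re(s^{1/2}) > 0. For every Schwartz function z : ℝ³ → ℂ, setting g := −Δz + s·z, one has ‖∇z‖²_{L²(ℝ³)} + |s|·‖z‖²_{L²(ℝ³)} ≤ ω^{−2}·‖g‖²_{L²(ℝ³)}; that is, the weighted norm ‖z‖_{H¹_s} := (‖∇z‖²_{L²} + |s|‖z‖²_{L²})^{1/2} satisfies ‖z‖_{H¹_s} ≤ ‖g‖_{L²}/ω. -/

import Mathlib

open MeasureTheory Complex SchwartzMap

/-- The partial derivative of `z : ℝ³ → ℂ` in the `i`-th coordinate direction. -/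
noncomputable def pd (i : Fin 3) (z : EuclideanSpace ℝ (Fin 3) → ℂ)
    (x : EuclideanSpace ℝ (Fin 3)) : ℂ :=
  deriv (fun t : ℝ => z (x + t • EuclideanSpace.single i (1 : ℝ))) 0

/-- The Euclidean Laplacian of `z : ℝ³ → ℂ`. -/
noncomputable def lap (z : EuclideanSpace ℝ (Fin 3) → ℂ)
    (x : EuclideanSpace ℝ (Fin 3)) : ℂ :=
  ∑ i : Fin 3, iteratedDeriv 2 (fun t : ℝ => z (x + t • EuclideanSpace.single i (1 : ℝ))) 0

local notation "E3" => EuclideanSpace ℝ (Fin 3)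

noncomputable def sv (i : Fin 3) : EuclideanSpace ℝ (Fin 3) := EuclideanSpace.single i (1 : ℝ)

noncomputable def pderivCLM (_𝕜 : Type) (m : E3) : SchwartzMap E3 ℂ →L[ℝ] SchwartzMap E3 ℂ :=
  SchwartzMap.evalCLM ℝ E3 ℂ m ∘L SchwartzMap.fderivCLM ℝ E3 ℂ

lemma pderivCLM_apply (m : E3) (f : SchwartzMap E3 ℂ) (x : E3) :
    pderivCLM ℝ m f x = fderiv ℝ f x m := rfl

lemma deriv_line (f : SchwartzMap E3 ℂ) (v : E3) (x : E3) (t : ℝ) :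
    HasDerivAt (fun t : ℝ => f (x + t • v)) (fderiv ℝ f (x + t • v) v) t := by
  have h : HasDerivAt (fun t : ℝ => x + t • v) v t := by
    simpa using ((hasDerivAt_id t).smul_const v).const_add x
  exact (f.differentiableAt.hasFDerivAt.comp_hasDerivAt t h)

lemma pd_eq (f : SchwartzMap E3 ℂ) (i : Fin 3) (x : E3) :
    pd i (⇑f) x = pderivCLM ℝ (sv i) f x := by
  rw [pd, pderivCLM_apply]
  have := deriv_line f (sv i) x 0
  simp only [zero_smul, add_zero] at this
  exact this.deriv

lemma lap_eq (f : SchwartzMap E3 ℂ) (x : E3) :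
    lap (⇑f) x = ∑ i : Fin 3, pderivCLM ℝ (sv i) (pderivCLM ℝ (sv i) f) x := by
  rw [lap]
  congr 1
  ext i
  have h1 : (fun t : ℝ => deriv (fun u : ℝ => f (x + u • sv i)) t)
      = fun t : ℝ => (pderivCLM ℝ (sv i) f) (x + t • sv i) := by
    ext t
    rw [(deriv_line f (sv i) x t).deriv, pderivCLM_apply]
  rw [iteratedDeriv_succ, iteratedDeriv_one]
  rw [show (fun t : ℝ => f (x + t • EuclideanSpace.single i (1:ℝ)))
      = (fun t : ℝ => f (x + t • sv i)) from rfl]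
  rw [show deriv (fun t : ℝ => f (x + t • sv i))
      = fun t => deriv (fun u : ℝ => f (x + u • sv i)) t from rfl]
  rw [h1]
  have := deriv_line (pderivCLM ℝ (sv i) f) (sv i) x 0
  simp only [zero_smul, add_zero] at this
  rw [this.deriv, pderivCLM_apply]

noncomputable def Bc : ℂ →L[ℝ] ℂ →L[ℝ] ℂ :=
  ((ContinuousLinearMap.mul ℝ ℂ).flip).comp Complex.conjCLE.toContinuousLinearMap

lemma Bc_apply (a b : ℂ) : Bc a b = b * (starRingEnd ℂ) a := rfl

lemma int_mul_norm (f g : SchwartzMap E3 ℂ) :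
    Integrable (fun x => ‖f x‖ * ‖g x‖) (volume : Measure E3) := by
  apply (g.integrable.norm.const_mul ((SchwartzMap.seminorm ℝ 0 0) f)).mono'
  · exact (f.continuous.norm.mul g.continuous.norm).aestronglyMeasurable
  · filter_upwards with x
    rw [Real.norm_of_nonneg (by positivity)]
    exact mul_le_mul_of_nonneg_right (f.norm_le_seminorm ℝ x) (norm_nonneg _)

lemma int_sq (f : SchwartzMap E3 ℂ) :
    Integrable (fun x => ‖f x‖ ^ 2) (volume : Measure E3) := by
  simpa [pow_two] using int_mul_norm f f

lemma int_mul_conj (f g : SchwartzMap E3 ℂ) :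
    Integrable (fun x => f x * (starRingEnd ℂ) (g x)) (volume : Measure E3) := by
  apply (int_mul_norm f g).mono'
  · exact (f.continuous.mul (Complex.continuous_conj.comp g.continuous)).aestronglyMeasurable
  · filter_upwards with x
    simp

lemma mul_conj_self (a : ℂ) : a * (starRingEnd ℂ) a = ((‖a‖ ^ 2 : ℝ) : ℂ) := by
  rw [Complex.mul_conj, Complex.normSq_eq_norm_sq]

lemma ibp (f : SchwartzMap E3 ℂ) (v : E3) :
    ∫ x : E3, (pderivCLM ℝ v (pderivCLM ℝ v f)) x * (starRingEnd ℂ) (f x)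
      = -((∫ x : E3, ‖pderivCLM ℝ v f x‖ ^ 2 : ℝ) : ℂ) := by
  set Df := pderivCLM ℝ v f with hDf
  have key := integral_bilinear_fderiv_right_eq_neg_left_of_integrable
    (μ := (volume : Measure E3)) (f := ⇑f) (g := ⇑Df) (v := v) (B := Bc)
    ?_ ?_ ?_ (fun x _ => f.differentiableAt) (fun x _ => Df.differentiableAt)
  · have e1 : ∀ x : E3, Bc (f x) (fderiv ℝ (⇑Df) x v)
        = (pderivCLM ℝ v Df) x * (starRingEnd ℂ) (f x) := by
      intro x; rw [Bc_apply, pderivCLM_apply]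
    have e2 : ∀ x : E3, Bc (fderiv ℝ (⇑f) x v) (Df x)
        = Df x * (starRingEnd ℂ) (Df x) := by
      intro x; rw [Bc_apply, hDf]; rw [pderivCLM_apply]
    simp only [e1, e2] at key
    rw [key]
    congr 1
    simp only [mul_conj_self]
    exact integral_ofReal
  · have : (fun x : E3 => Bc (fderiv ℝ (⇑f) x v) (Df x))
        = fun x => Df x * (starRingEnd ℂ) (Df x) := by
      ext x; rw [Bc_apply, hDf, pderivCLM_apply]
    rw [this]; exact int_mul_conj Df Df
  · have : (fun x : E3 => Bc (f x) (fderiv ℝ (⇑Df) x v))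
        = fun x => (pderivCLM ℝ v Df) x * (starRingEnd ℂ) (f x) := by
      ext x; rw [Bc_apply, pderivCLM_apply]
    rw [this]; exact int_mul_conj (pderivCLM ℝ v Df) f
  · have : (fun x : E3 => Bc (f x) (Df x)) = fun x => Df x * (starRingEnd ℂ) (f x) := by
      ext x; rw [Bc_apply]
    rw [this]; exact int_mul_conj Df f

lemma memL2norm (f : SchwartzMap E3 ℂ) :
    MemLp (fun x => ‖f x‖) (ENNReal.ofReal 2) (volume : Measure E3) := by
  have h2 : (ENNReal.ofReal 2) = 2 := by norm_num
  rw [h2]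
  exact (memLp_two_iff_integrable_sq f.continuous.norm.aestronglyMeasurable).2 (int_sq f)

lemma cauchy_schwarz (f h : SchwartzMap E3 ℂ) :
    ‖∫ x : E3, f x * (starRingEnd ℂ) (h x)‖
      ≤ Real.sqrt (∫ x : E3, ‖f x‖ ^ 2) * Real.sqrt (∫ x : E3, ‖h x‖ ^ 2) := by
  have h1 : ‖∫ x : E3, f x * (starRingEnd ℂ) (h x)‖ ≤ ∫ x : E3, ‖f x‖ * ‖h x‖ := by
    refine le_trans (norm_integral_le_integral_norm _) (le_of_eq ?_)
    congr 1; ext x; simp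
  refine h1.trans ?_
  have hconj : (2:ℝ).HolderConjugate 2 := Real.HolderConjugate.two_two
  have := integral_mul_le_Lp_mul_Lq_of_nonneg (μ := (volume : Measure E3)) hconj
    (f := fun x => ‖f x‖) (g := fun x => ‖h x‖)
    (Filter.Eventually.of_forall fun x => norm_nonneg _)
    (Filter.Eventually.of_forall fun x => norm_nonneg _)
    (memL2norm f) (memL2norm h)
  refine this.trans (le_of_eq ?_)
  have e : ∀ (u : E3 → ℝ), (∫ x : E3, u x ^ (2:ℝ)) = ∫ x : E3, u x ^ 2 := by
    intro u; congr 1; ext x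
    rw [show (2:ℝ) = ((2:ℕ):ℝ) by norm_num, Real.rpow_natCast]
  rw [e, e]
  rw [Real.sqrt_eq_rpow, Real.sqrt_eq_rpow]

set_option maxHeartbeats 1000000 in
/-- For `s` in the slit plane with `ω := Re(s^{1/2}) > 0` and a Schwartz function
`z : ℝ³ → ℂ`, setting `g := −Δz + s·z`, the weighted `H¹_s` estimate
`‖∇z‖²_{L²} + |s|·‖z‖²_{L²} ≤ ω^{−2}·‖g‖²_{L²}` holds. -/
theorem stmt4 (s : ℂ) (hs : s ∈ Complex.slitPlane)
    (z : SchwartzMap (EuclideanSpace ℝ (Fin 3)) ℂ)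
    (g : EuclideanSpace ℝ (Fin 3) → ℂ)
    (hg : ∀ x, g x = -lap (⇑z) x + s * z x) :
    (∫ x, ∑ i : Fin 3, ‖pd i (⇑z) x‖ ^ 2) + ‖s‖ * ∫ x, ‖z x‖ ^ 2
      ≤ ((s ^ (1 / 2 : ℂ)).re) ⁻¹ ^ 2 * ∫ x, ‖g x‖ ^ 2 := by
  classical
  set D : Fin 3 → SchwartzMap E3 ℂ := fun i => pderivCLM ℝ (sv i) z with hD
  set G : SchwartzMap E3 ℂ :=
    s • z - ∑ i : Fin 3, pderivCLM ℝ (sv i) (pderivCLM ℝ (sv i) z) with hG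
  have hGx : ∀ x : E3, G x = s * z x
      - ∑ i : Fin 3, (pderivCLM ℝ (sv i) (pderivCLM ℝ (sv i) z)) x := by
    intro x
    rw [hG, SchwartzMap.sub_apply, SchwartzMap.smul_apply, smul_eq_mul]
    congr 1
  have hgG : ∀ x : E3, g x = G x := by
    intro x
    rw [hg x, lap_eq z x, hGx x]
    ring
  -- real quantities
  set a : ℝ := ∑ i : Fin 3, ∫ x : E3, ‖(D i) x‖ ^ 2 with ha'
  set b : ℝ := ∫ x : E3, ‖z x‖ ^ 2 with hb'
  set Gn : ℝ := ∫ x : E3, ‖G x‖ ^ 2 with hGn'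
  have ha : 0 ≤ a := Finset.sum_nonneg fun i _ => integral_nonneg fun x => by positivity
  have hb : 0 ≤ b := integral_nonneg fun x => by positivity
  have hGn : 0 ≤ Gn := integral_nonneg fun x => by positivity
  -- the first integral in the goal equals a
  have hfirst : (∫ x : E3, ∑ i : Fin 3, ‖pd i (⇑z) x‖ ^ 2) = a := by
    rw [ha']
    rw [show (fun x : E3 => ∑ i : Fin 3, ‖pd i (⇑z) x‖ ^ 2)
        = fun x : E3 => ∑ i : Fin 3, ‖(D i) x‖ ^ 2 by
      ext x; exact Finset.sum_congr rfl fun i _ => by rw [pd_eq]]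
    exact integral_finset_sum _ fun i _ => int_sq (D i)
  -- the last integral equals Gn
  have hlast : (∫ x : E3, ‖g x‖ ^ 2) = Gn := by
    rw [hGn']; congr 1; ext x; rw [hgG x]
  -- the pairing identity
  have hI : (∫ x : E3, G x * (starRingEnd ℂ) (z x)) = (a : ℂ) + s * (b : ℂ) := by
    have hsplit : (fun x : E3 => G x * (starRingEnd ℂ) (z x))
        = fun x : E3 => s * (z x * (starRingEnd ℂ) (z x))
          - ∑ i : Fin 3, ((pderivCLM ℝ (sv i) (pderivCLM ℝ (sv i) z)) x
              * (starRingEnd ℂ) (z x)) := by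
      ext x
      rw [hGx x, sub_mul, Finset.sum_mul, mul_assoc]
    rw [hsplit]
    rw [integral_sub ((int_mul_conj z z).const_mul s)
      (integrable_finset_sum _ fun i _ => int_mul_conj _ z)]
    rw [integral_const_mul, integral_finset_sum _ fun i _ => int_mul_conj _ z]
    have hzz : (∫ x : E3, z x * (starRingEnd ℂ) (z x)) = (b : ℂ) := by
      simp only [mul_conj_self]
      rw [hb']; exact integral_ofReal
    have hdd : ∀ i : Fin 3,
        (∫ x : E3, (pderivCLM ℝ (sv i) (pderivCLM ℝ (sv i) z)) x * (starRingEnd ℂ) (z x))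
          = -((∫ x : E3, ‖(D i) x‖ ^ 2 : ℝ) : ℂ) := fun i => ibp z (sv i)
    rw [hzz]
    rw [Finset.sum_congr rfl fun i _ => hdd i]
    rw [ha']
    push_cast
    rw [Finset.sum_neg_distrib]
    ring
  -- Cauchy-Schwarz
  have hCS : ‖(a : ℂ) + s * (b : ℂ)‖ ≤ Real.sqrt Gn * Real.sqrt b := by
    rw [← hI]; exact cauchy_schwarz G z
  have hCS2 : ‖(a : ℂ) + s * (b : ℂ)‖ ^ 2 ≤ Gn * b := by
    have := pow_le_pow_left₀ (norm_nonneg _) hCS 2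
    rwa [mul_pow, Real.sq_sqrt hGn, Real.sq_sqrt hb] at this
  have hnormsq : ‖(a : ℂ) + s * (b : ℂ)‖ ^ 2 = (a + s.re * b) ^ 2 + (s.im * b) ^ 2 := by
    rw [Complex.sq_norm, Complex.normSq_apply]
    simp [pow_two]
  rw [hnormsq] at hCS2
  -- facts about s and ω
  set r : ℝ := ‖s‖ with hr'
  have hrre : s.re ≤ r := Complex.re_le_norm s
  have hrsq : s.re ^ 2 + s.im ^ 2 = r ^ 2 := by
    rw [hr', Complex.sq_norm, Complex.normSq_apply]; ring
  have hrpos : 0 < r + s.re := by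
    rw [hr']
    rcases Complex.mem_slitPlane_iff.1 hs with h | h
    · have h0 := norm_nonneg s
      linarith
    · have h2 := Complex.abs_re_lt_norm.mpr h
      rw [abs_lt] at h2
      linarith
  set ω : ℝ := (s ^ (1 / 2 : ℂ)).re with hω'
  have hωeq : ω = Real.sqrt ((r + s.re) / 2) := by
    rw [hω', show (1 / 2 : ℂ) = (2⁻¹ : ℂ) by norm_num, Complex.cpow_inv_two_re, ← hr']
  have hωpos : 0 < ω := by
    rw [hωeq]; exact Real.sqrt_pos.mpr (by linarith)
  have hω2 : ω ^ 2 = (r + s.re) / 2 := by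
    rw [hωeq, Real.sq_sqrt (by linarith)]
  -- final algebra
  have hrnn : 0 ≤ r := by rw [hr']; exact norm_nonneg s
  rw [hfirst, hlast]
  set t : ℝ := s.re with ht'
  set u : ℝ := s.im with hu'
  have hu2 : (u * b) ^ 2 = (r ^ 2 - t ^ 2) * b ^ 2 := by
    have : u ^ 2 = r ^ 2 - t ^ 2 := by linarith [hrsq]
    rw [mul_pow, this]
  rw [hu2] at hCS2
  have h1 : (r + t) / 2 * (a + r * b) ^ 2 ≤ r * (Gn * b) := by
    nlinarith [mul_nonneg (sub_nonneg.2 hrre) (sq_nonneg (a - r * b)),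
      mul_le_mul_of_nonneg_left hCS2 hrnn]
  have h2 : (r + t) / 2 * (a + r * b) ^ 2 ≤ Gn * (a + r * b) := by
    refine h1.trans ?_
    have := mul_le_mul_of_nonneg_left (show r * b ≤ a + r * b by linarith) hGn
    nlinarith [this]
  rcases eq_or_lt_of_le (show (0:ℝ) ≤ a + r * b from add_nonneg ha (mul_nonneg hrnn hb))
    with hX | hX
  · rw [← hX]
    exact mul_nonneg (by positivity) hGn
  · have h3 : (r + t) / 2 * (a + r * b) ≤ Gn := by
      nlinarith [h2, hX]
    have hhalf : 0 < (r + t) / 2 := by linarith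
    rw [inv_pow, hω2, inv_mul_eq_div, le_div_iff₀ hhalf]
    linarith [h3]
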